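/- Let C be a nonempty convex subset of a real smooth Banach space E, x ∈ E, y ∈ C, and μ a gauge function with duality mapping J_μ. Then ‖x - y‖ = d(x, C) if and only if ⟨y - z, J_μ(x - y)⟩ ≥ 0 for all z ∈ C. -/

import Mathlib

/-- The duality mapping with gauge function `μ`:
`J_μ(x) = {f ∈ E* : ⟨x, f⟩ = ‖x‖‖f‖, ‖f‖ = μ(‖x‖)}`. -/
def gaugeDualityMap {E : Type*} [NormedAddCommGroup E] [NormedSpace ℝ E]
    (μ : ℝ → ℝ) (x : E) : Set (E →L[ℝ] ℝ) :=
  {f | f x = ‖x‖ * ‖f‖ ∧ ‖f‖ = μ ‖x‖}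

section Aux

variable {E : Type*} [NormedAddCommGroup E] [NormedSpace ℝ E]

/-- Difference quotient of the norm at `u` in direction `v`. -/
noncomputable def Qd (u v : E) (t : ℝ) : ℝ := (‖u + t • v‖ - ‖u‖) / t

/-- Right derivative (as an infimum) of the norm at `u` in direction `v`. -/
noncomputable def pfun (u v : E) : ℝ := sInf (Qd u v '' Set.Ioi 0)

lemma Qd_ge (u v : E) {t : ℝ} (ht : 0 < t) : -‖v‖ ≤ Qd u v t := by
  have h1 : ‖u‖ - ‖u + t • v‖ ≤ t * ‖v‖ := by
    have h := norm_sub_norm_le u (u + t • v)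
    rw [show u - (u + t • v) = -(t • v) by abel, norm_neg, norm_smul,
      Real.norm_eq_abs, abs_of_pos ht] at h
    linarith
  rw [Qd, le_div_iff₀ ht]
  nlinarith [norm_nonneg v]

lemma Qd_le (u v : E) {t : ℝ} (ht : 0 < t) : Qd u v t ≤ ‖v‖ := by
  have h1 : ‖u + t • v‖ - ‖u‖ ≤ t * ‖v‖ := by
    have h := norm_add_le u (t • v)
    rw [norm_smul, Real.norm_eq_abs, abs_of_pos ht] at h
    linarith
  rw [Qd, div_le_iff₀ ht]
  nlinarith

lemma pfun_le_Qd (u v : E) {t : ℝ} (ht : 0 < t) : pfun u v ≤ Qd u v t :=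
  csInf_le ⟨-‖v‖, by rintro _ ⟨s, hs, rfl⟩; exact Qd_ge u v hs⟩ ⟨t, ht, rfl⟩

lemma le_pfun (u v : E) (a : ℝ) (h : ∀ t, 0 < t → a ≤ Qd u v t) : a ≤ pfun u v :=
  le_csInf ⟨Qd u v 1, 1, Set.mem_Ioi.mpr one_pos, rfl⟩ (by rintro _ ⟨s, hs, rfl⟩; exact h s hs)

lemma pfun_le_norm (u v : E) : pfun u v ≤ ‖v‖ :=
  (pfun_le_Qd u v one_pos).trans (Qd_le u v one_pos)

lemma Qd_mono (u v : E) {s t : ℝ} (hs : 0 < s) (hst : s ≤ t) : Qd u v s ≤ Qd u v t := by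
  have ht : 0 < t := hs.trans_le hst
  have key : t * ‖u + s • v‖ ≤ (t - s) * ‖u‖ + s * ‖u + t • v‖ := by
    have heq : t • (u + s • v) = (t - s) • u + s • (u + t • v) := by module
    calc t * ‖u + s • v‖ = ‖t • (u + s • v)‖ := by
          rw [norm_smul, Real.norm_eq_abs, abs_of_pos ht]
      _ = ‖(t - s) • u + s • (u + t • v)‖ := by rw [heq]
      _ ≤ ‖(t - s) • u‖ + ‖s • (u + t • v)‖ := norm_add_le _ _
      _ = (t - s) * ‖u‖ + s * ‖u + t • v‖ := by
          rw [norm_smul, norm_smul, Real.norm_eq_abs, Real.norm_eq_abs,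
            abs_of_nonneg (by linarith), abs_of_pos hs]
  rw [Qd, Qd, div_le_div_iff₀ hs ht]
  nlinarith

lemma Qd_add_le (u v₁ v₂ : E) {s : ℝ} (hs : 0 < s) :
    Qd u (v₁ + v₂) (s / 2) ≤ Qd u v₁ s + Qd u v₂ s := by
  have key : 2 * ‖u + (s / 2) • (v₁ + v₂)‖ ≤ ‖u + s • v₁‖ + ‖u + s • v₂‖ := by
    have heq : (2 : ℝ) • (u + (s / 2) • (v₁ + v₂)) = (u + s • v₁) + (u + s • v₂) := by
      module
    calc 2 * ‖u + (s / 2) • (v₁ + v₂)‖ = ‖(2 : ℝ) • (u + (s / 2) • (v₁ + v₂))‖ := by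
          rw [norm_smul]; simp
      _ = ‖(u + s • v₁) + (u + s • v₂)‖ := by rw [heq]
      _ ≤ _ := norm_add_le _ _
  rw [Qd, Qd, Qd, ← add_div, div_le_div_iff₀ (by positivity) hs]
  nlinarith [mul_le_mul_of_nonneg_left key (by positivity : (0:ℝ) ≤ s / 2)]

lemma pfun_add (u v₁ v₂ : E) : pfun u (v₁ + v₂) ≤ pfun u v₁ + pfun u v₂ := by
  refine le_of_forall_pos_le_add fun ε hε => ?_
  obtain ⟨a, ⟨t₁, ht₁, rfl⟩, ha⟩ := Real.lt_sInf_add_pos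
    (⟨Qd u v₁ 1, 1, Set.mem_Ioi.mpr one_pos, rfl⟩ : (Qd u v₁ '' Set.Ioi 0).Nonempty) (half_pos hε)
  obtain ⟨b, ⟨t₂, ht₂, rfl⟩, hb⟩ := Real.lt_sInf_add_pos
    (⟨Qd u v₂ 1, 1, Set.mem_Ioi.mpr one_pos, rfl⟩ : (Qd u v₂ '' Set.Ioi 0).Nonempty) (half_pos hε)
  have ha' : Qd u v₁ t₁ < pfun u v₁ + ε / 2 := ha
  have hb' : Qd u v₂ t₂ < pfun u v₂ + ε / 2 := hb
  have ht₁' : (0:ℝ) < t₁ := ht₁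
  have ht₂' : (0:ℝ) < t₂ := ht₂
  have hs : 0 < min t₁ t₂ := lt_min ht₁' ht₂'
  have h1 : pfun u (v₁ + v₂) ≤ Qd u v₁ (min t₁ t₂) + Qd u v₂ (min t₁ t₂) :=
    (pfun_le_Qd u _ (by positivity)).trans (Qd_add_le u v₁ v₂ hs)
  have h2 := Qd_mono u v₁ hs (min_le_left t₁ t₂)
  have h3 := Qd_mono u v₂ hs (min_le_right t₁ t₂)
  linarith

lemma Qd_smul (u v : E) {c t : ℝ} (hc : 0 < c) (ht : 0 < t) :
    Qd u (c • v) t = c * Qd u v (c * t) := by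
  rw [Qd, Qd, smul_smul, mul_comm t c]
  field_simp

lemma pfun_smul (u : E) {c : ℝ} (hc : 0 < c) (v : E) :
    pfun u (c • v) = c * pfun u v := by
  apply le_antisymm
  · have h : (1 / c) * pfun u (c • v) ≤ pfun u v := by
      apply le_pfun
      intro t ht
      have h1 : pfun u (c • v) ≤ Qd u (c • v) (t / c) := pfun_le_Qd u _ (by positivity)
      rw [Qd_smul u v hc (by positivity), show c * (t / c) = t by field_simp] at h1
      rw [one_div, inv_mul_le_iff₀ hc]
      exact h1
    calc pfun u (c • v) = c * ((1 / c) * pfun u (c • v)) := by field_simp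
      _ ≤ c * pfun u v := by nlinarith
  · apply le_pfun
    intro t ht
    rw [Qd_smul u v hc ht]
    exact mul_le_mul_of_nonneg_left (pfun_le_Qd u v (by positivity)) hc.le

lemma Qd_zero (u : E) (t : ℝ) : Qd u 0 t = 0 := by simp [Qd]

lemma pfun_zero (u : E) : pfun u 0 = 0 :=
  le_antisymm (by simpa [Qd_zero] using pfun_le_Qd u 0 one_pos)
    (le_pfun u 0 0 fun t ht => by simp [Qd_zero])

lemma pfun_self_le (u : E) : pfun u u ≤ ‖u‖ := by
  have h := pfun_le_Qd u u one_pos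
  have h1 : ‖u + (1:ℝ) • u‖ = 2 * ‖u‖ := by
    rw [show u + (1:ℝ) • u = (2:ℝ) • u by module, norm_smul]
    simp
  rw [Qd, h1] at h
  linarith [h]

lemma pfun_neg_self_le (u : E) : pfun u (-u) ≤ -‖u‖ := by
  have h := pfun_le_Qd u (-u) (by norm_num : (0:ℝ) < 1 / 2)
  have h1 : ‖u + (1/2 : ℝ) • (-u)‖ = (1/2) * ‖u‖ := by
    rw [show u + (1/2 : ℝ) • (-u) = (1/2 : ℝ) • u by module, norm_smul]
    simp
  rw [Qd, h1] at h
  linarith [h]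

lemma key_lemma (μ : ℝ → ℝ) (hμmono : StrictMonoOn μ (Set.Ici 0)) (hμ0 : μ 0 = 0)
    (jμ : E → (E →L[ℝ] ℝ)) (hjμ : ∀ z : E, jμ z ∈ gaugeDualityMap μ z)
    (hjμuniq : ∀ z : E, ∀ f ∈ gaugeDualityMap μ z, f = jμ z)
    (u w : E) (hmin : ∀ t : ℝ, 0 < t → t ≤ 1 → ‖u‖ ≤ ‖u + t • w‖) :
    0 ≤ jμ u w := by
  by_cases hu : u = 0
  · have h0 : ‖jμ u‖ = 0 := by
      have h := (hjμ u).2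
      rw [hu] at h ⊢
      simpa [hμ0] using h
    rw [norm_eq_zero.mp h0]
    simp
  by_cases hw : w = 0
  · simp [hw]
  have hun : 0 < ‖u‖ := norm_pos_iff.mpr hu
  have hμu : 0 < μ ‖u‖ := by
    have h := hμmono Set.self_mem_Ici (Set.mem_Ici.mpr hun.le) hun
    rwa [hμ0] at h
  have hpw : 0 ≤ pfun u w := by
    apply le_pfun
    intro t ht
    rcases le_or_gt t 1 with h1 | h1
    · rw [Qd]
      apply div_nonneg _ ht.le
      linarith [hmin t ht h1]
    · refine le_trans ?_ (Qd_mono u w one_pos h1.le)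
      rw [Qd, div_one, one_smul]
      have h := hmin 1 one_pos le_rfl
      rw [one_smul] at h
      linarith
  have hdom : ∀ x : (LinearPMap.mkSpanSingleton (K := ℝ) (L := ℝ) (σ := RingHom.id ℝ) w (pfun u w) hw).domain,
      (LinearPMap.mkSpanSingleton (K := ℝ) (L := ℝ) (σ := RingHom.id ℝ) w (pfun u w) hw) x ≤ pfun u x := by
    rintro ⟨xx, hxx⟩
    have hxx' : xx ∈ Submodule.span ℝ {w} := hxx
    obtain ⟨c, rfl⟩ := Submodule.mem_span_singleton.mp hxx'
    erw [LinearPMap.mkSpanSingleton'_apply]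
    simp only [smul_eq_mul, RingHom.id_apply]
    rcases lt_trichotomy c 0 with hc | hc | hc
    · have h1 : pfun u ((-c) • w) = (-c) * pfun u w := pfun_smul u (by linarith) w
      have h2 : 0 ≤ pfun u (c • w) + pfun u ((-c) • w) := by
        have h := pfun_add u (c • w) ((-c) • w)
        rw [show c • w + (-c) • w = (0:E) by module, pfun_zero] at h
        linarith
      linarith
    · subst hc
      simp [pfun_zero]
    · rw [pfun_smul u hc w]
  obtain ⟨g, hg1, hg2⟩ := exists_extension_of_le_sublinear
    (LinearPMap.mkSpanSingleton (K := ℝ) (L := ℝ) (σ := RingHom.id ℝ) w (pfun u w) hw) (pfun u)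
    (fun c hc x => pfun_smul u hc x) (pfun_add u) hdom
  have hgw : g w = pfun u w := by
    have h := hg1 ⟨w, Submodule.mem_span_singleton_self w⟩
    erw [LinearPMap.mkSpanSingleton'_apply_self] at h
    exact h
  have hgu : g u = ‖u‖ := by
    have h1 : g u ≤ ‖u‖ := (hg2 u).trans (pfun_self_le u)
    have h2 : g (-u) ≤ -‖u‖ := (hg2 (-u)).trans (pfun_neg_self_le u)
    rw [map_neg] at h2
    linarith
  have hgb : ∀ v : E, ‖g v‖ ≤ 1 * ‖v‖ := by
    intro v
    rw [Real.norm_eq_abs, abs_le, one_mul]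
    constructor
    · have h := (hg2 (-v)).trans (pfun_le_norm u (-v))
      rw [map_neg, norm_neg] at h
      linarith
    · exact (hg2 v).trans (pfun_le_norm u v)
  set G : E →L[ℝ] ℝ := LinearMap.mkContinuous g 1 hgb with hG
  have hGapp : ∀ v : E, G v = g v := fun v => rfl
  have hGnorm : ‖G‖ = 1 := by
    apply le_antisymm (LinearMap.mkContinuous_norm_le g zero_le_one hgb)
    have h := G.le_opNorm u
    rw [hGapp, hgu, Real.norm_eq_abs, abs_of_pos hun] at h
    nlinarith
  set G' : E →L[ℝ] ℝ := (μ ‖u‖) • G with hG'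
  have hG'norm : ‖G'‖ = μ ‖u‖ := by
    have h : ‖(μ ‖u‖) • G‖ = ‖μ ‖u‖‖ * ‖G‖ := by exact norm_smul (μ ‖u‖) G
    rw [hGnorm, mul_one, Real.norm_eq_abs, abs_of_pos hμu] at h
    exact h
  have hmem : G' ∈ gaugeDualityMap μ u := by
    constructor
    · show ((μ ‖u‖) • G) u = ‖u‖ * ‖G'‖
      rw [ContinuousLinearMap.smul_apply, hGapp, hgu, hG'norm, smul_eq_mul]
      ring
    · exact hG'norm
  have hGj : G' = jμ u := hjμuniq u G' hmem
  have hval : jμ u w = μ ‖u‖ * pfun u w := by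
    rw [← hGj, hG', ContinuousLinearMap.smul_apply, hGapp, hgw, smul_eq_mul]
  rw [hval]
  exact mul_nonneg hμu.le hpw

end Aux

theorem stmt_13 {E : Type*} [NormedAddCommGroup E] [NormedSpace ℝ E] [CompleteSpace E]
    (C : Set E) (hC : C.Nonempty) (hCv : Convex ℝ C)
    -- `μ` is a gauge function:
    (μ : ℝ → ℝ) (hμcont : ContinuousOn μ (Set.Ici 0))
    (hμmono : StrictMonoOn μ (Set.Ici 0)) (hμ0 : μ 0 = 0)
    (hμtop : Filter.Tendsto μ Filter.atTop Filter.atTop)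
    -- `E` is smooth: the duality mapping `J_μ` is single-valued, given by `jμ`:
    (jμ : E → (E →L[ℝ] ℝ)) (hjμ : ∀ z : E, jμ z ∈ gaugeDualityMap μ z)
    (hjμuniq : ∀ z : E, ∀ f ∈ gaugeDualityMap μ z, f = jμ z)
    (x : E) (y : E) (hy : y ∈ C) :
    ‖x - y‖ = Metric.infDist x C ↔ ∀ z ∈ C, jμ (x - y) (y - z) ≥ 0 := by
  constructor
  · intro h z hz
    apply key_lemma μ hμmono hμ0 jμ hjμ hjμuniq (x - y) (y - z)
    intro t ht ht1
    have hq : (1 - t) • y + t • z ∈ C := hCv hy hz (by linarith) ht.le (by ring)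
    have h1 : Metric.infDist x C ≤ dist x ((1 - t) • y + t • z) :=
      Metric.infDist_le_dist_of_mem hq
    rw [dist_eq_norm, show x - ((1 - t) • y + t • z) = (x - y) + t • (y - z) by module] at h1
    rw [h]
    exact h1
  · intro H
    have key2 : ∀ z ∈ C, ‖x - y‖ ≤ ‖x - z‖ := by
      intro z hz
      rcases eq_or_ne x y with hxy | hxy
      · simp [hxy]
      have hun : 0 < ‖x - y‖ := by rw [norm_pos_iff, sub_ne_zero]; exact hxy
      have hμu : 0 < μ ‖x - y‖ := by
        have h := hμmono Set.self_mem_Ici (Set.mem_Ici.mpr hun.le) hun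
        rwa [hμ0] at h
      obtain ⟨hf1, hf2⟩ := hjμ (x - y)
      have hH := H z hz
      have hsplit : (jμ (x - y)) (x - z) = (jμ (x - y)) (x - y) + (jμ (x - y)) (y - z) := by
        rw [← map_add]
        congr 1
        abel
      have hle : (jμ (x - y)) (x - z) ≤ ‖jμ (x - y)‖ * ‖x - z‖ := by
        calc (jμ (x - y)) (x - z) ≤ |(jμ (x - y)) (x - z)| := le_abs_self _
          _ = ‖(jμ (x - y)) (x - z)‖ := (Real.norm_eq_abs _).symm
          _ ≤ ‖jμ (x - y)‖ * ‖x - z‖ := (jμ (x - y)).le_opNorm (x - z)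
      have hμf : 0 < ‖jμ (x - y)‖ := by rw [hf2]; exact hμu
      nlinarith
    apply le_antisymm
    · by_contra hlt
      push_neg at hlt
      obtain ⟨z, hz, hdz⟩ := (Metric.infDist_lt_iff hC).mp hlt
      rw [dist_eq_norm] at hdz
      exact absurd (key2 z hz) (by linarith)
    · rw [← dist_eq_norm]
      exact Metric.infDist_le_dist_of_mem hy
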